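/- Let g be a probability density on ℝ₊^m satisfying |g(z)/g₀(z) − 1| ≤ δ for all z, where g₀(z) = α^m ∏ᵢ(1+zᵢ)^{-(α+1)} is the product Pareto density and 0 < δ < 1. Let Z ∼ g and Z̃ ∼ g₀. Then for any τ > 0 and any weighted norm ‖·‖_a with positive weights, the total variation distance between the conditional laws of Z/‖Z‖_a given ‖Z‖_a > τ and of Z̃/‖Z̃‖_a given ‖Z̃‖_a > τ is at most 2δ. -/

import Mathlib

open MeasureTheory Filter Topology Real
open scoped ENNReal

/-- The measure on the positive orthant of `ℝ^m` with Lebesgue density `g`. -/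
noncomputable def orthMeasure (m : ℕ) (g : (Fin m → ℝ) → ℝ) :
    Measure (Fin m → ℝ) :=
  ((volume : Measure (Fin m → ℝ)).restrict {z | ∀ i, 0 < z i}).withDensity
    fun z => ENNReal.ofReal (g z)

/-- The conditional law of `Z/‖Z‖_a` given `‖Z‖_a > τ`, where
`‖z‖_a = Σᵢ aᵢ |zᵢ|`. -/
noncomputable def condAngular (m : ℕ) (a : Fin m → ℝ) (μ : Measure (Fin m → ℝ))
    (τ : ℝ) : Measure (Fin m → ℝ) :=
  ((μ {z | τ < ∑ i, a i * |z i|})⁻¹ •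
      μ.restrict {z | τ < ∑ i, a i * |z i|}).map
    fun z => (∑ i, a i * |z i|)⁻¹ • z

/-- If a probability density `g` on `ℝ₊^m` satisfies `|g/g₀ − 1| ≤ δ`
pointwise, where `g₀(z) = α^m ∏ᵢ (1+zᵢ)^{-(α+1)}` is the product Pareto
density and `0 < δ < 1`, then for any threshold `τ > 0` and positive weights
`a`, the total variation distance between the conditional angular laws of
`Z ∼ g` and `Z̃ ∼ g₀` is at most `2δ`. -/
theorem condAngular_tv_bound (m : ℕ) (α δ : ℝ) (hα : 0 < α) (hδ : 0 < δ)
    (hδ1 : δ < 1) (a : Fin m → ℝ) (ha : ∀ i, 0 < a i) (τ : ℝ) (hτ : 0 < τ)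
    (g : (Fin m → ℝ) → ℝ)
    (hgprob : IsProbabilityMeasure (orthMeasure m g))
    (hratio : ∀ z : Fin m → ℝ, (∀ i, 0 < z i) →
      |g z / (α ^ m * ∏ i, (1 + z i) ^ (-(α + 1))) - 1| ≤ δ) :
    ∀ B : Set (Fin m → ℝ), MeasurableSet B →
      |((condAngular m a (orthMeasure m g) τ) B).toReal -
          ((condAngular m a
            (orthMeasure m fun z => α ^ m * ∏ i, (1 + z i) ^ (-(α + 1))) τ)
            B).toReal| ≤ 2 * δ := by
  intro B hB
  -- notation
  set g₀ : (Fin m → ℝ) → ℝ := fun z => α ^ m * ∏ i, (1 + z i) ^ (-(α + 1)) with hg₀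
  set orth : Set (Fin m → ℝ) := {z | ∀ i, 0 < z i} with horth
  set S : Set (Fin m → ℝ) := {z | τ < ∑ i, a i * |z i|} with hSdef
  set μ := orthMeasure m g with hμ
  set ν := orthMeasure m g₀ with hν
  have horth_meas : MeasurableSet orth := by
    have : orth = ⋂ i, {z : Fin m → ℝ | 0 < z i} := by ext z; simp [horth]
    rw [this]
    exact MeasurableSet.iInter fun i => measurableSet_lt measurable_const (measurable_pi_apply i)
  have hsum : Measurable fun z : Fin m → ℝ => ∑ i, a i * |z i| :=
    Finset.measurable_sum _ fun i _ => measurable_const.mul (measurable_pi_apply i).abs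
  have hSmeas : MeasurableSet S := measurableSet_lt measurable_const hsum
  have hTmeas : Measurable (fun z : Fin m → ℝ => (∑ i, a i * |z i|)⁻¹ • z) :=
    hsum.inv.smul measurable_id
  have hApre : MeasurableSet ((fun z : Fin m → ℝ => (∑ i, a i * |z i|)⁻¹ • z) ⁻¹' B) :=
    hTmeas hB
  set A : Set (Fin m → ℝ) := ((fun z : Fin m → ℝ => (∑ i, a i * |z i|)⁻¹ • z) ⁻¹' B) ∩ S
    with hAdef
  have hAmeas : MeasurableSet A := hApre.inter hSmeas
  -- evaluate condAngular
  have heval : ∀ κ : Measure (Fin m → ℝ),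
      condAngular m a κ τ B = (κ S)⁻¹ * κ A := by
    intro κ
    rw [condAngular, Measure.map_apply hTmeas hB]
    simp only [Measure.smul_apply, Measure.restrict_apply hApre, smul_eq_mul]
    rfl
  -- pointwise density bounds
  have hg₀pos : ∀ z ∈ orth, 0 < g₀ z := by
    intro z hz
    exact mul_pos (pow_pos hα m)
      (Finset.prod_pos fun i _ => Real.rpow_pos_of_pos (by linarith [hz i]) _)
  have hbounds : ∀ z ∈ orth, (1 - δ) * g₀ z ≤ g z ∧ g z ≤ (1 + δ) * g₀ z := by
    intro z hz
    have h0 := hg₀pos z hz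
    have h := abs_le.mp (hratio z hz)
    constructor
    · have := (le_div_iff₀ h0).mp (by linarith [h.1] : 1 - δ ≤ g z / g₀ z)
      linarith
    · have := (div_le_iff₀ h0).mp (by linarith [h.2] : g z / g₀ z ≤ 1 + δ)
      linarith
  -- key comparison in ENNReal
  have key : ∀ E : Set (Fin m → ℝ), MeasurableSet E →
      ENNReal.ofReal (1 - δ) * ν E ≤ μ E ∧ μ E ≤ ENNReal.ofReal (1 + δ) * ν E := by
    intro E hE
    have hμE : μ E = ∫⁻ z in E, ENNReal.ofReal (g z) ∂(volume.restrict orth) := by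
      rw [hμ, orthMeasure, withDensity_apply _ hE]
    have hνE : ν E = ∫⁻ z in E, ENNReal.ofReal (g₀ z) ∂(volume.restrict orth) := by
      rw [hν, orthMeasure, withDensity_apply _ hE]
    have hae : ∀ᵐ z ∂((volume.restrict orth).restrict E), z ∈ orth :=
      ae_restrict_of_ae (ae_restrict_mem horth_meas)
    constructor
    · rw [hμE, hνE, ← lintegral_const_mul' _ _ ENNReal.ofReal_ne_top]
      refine lintegral_mono_ae ?_
      filter_upwards [hae] with z hz
      rw [← ENNReal.ofReal_mul (by linarith)]
      exact ENNReal.ofReal_le_ofReal (hbounds z hz).1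
    · rw [hμE, hνE, ← lintegral_const_mul' _ _ ENNReal.ofReal_ne_top]
      refine lintegral_mono_ae ?_
      filter_upwards [hae] with z hz
      rw [← ENNReal.ofReal_mul (by linarith)]
      exact ENNReal.ofReal_le_ofReal (hbounds z hz).2
  -- case m = 0
  rcases Nat.eq_zero_or_pos m with hm | hm
  · have hSempty : S = ∅ := by
      ext z
      simp only [hSdef, Set.mem_setOf_eq, Set.mem_empty_iff_false, iff_false, not_lt]
      subst hm
      simp only [Finset.univ_eq_empty, Finset.sum_empty]
      linarith
    have hzero : ∀ κ : Measure (Fin m → ℝ), condAngular m a κ τ B = 0 := by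
      intro κ
      rw [heval κ, hAdef, hSempty]
      simp
    rw [hzero μ, hzero ν]
    simp only [ENNReal.toReal_zero, sub_zero, abs_zero]
    linarith
  -- ν S > 0
  have hνSpos : 0 < ν S := by
    have hmeasg₀ : Measurable fun z : Fin m → ℝ => ENNReal.ofReal (g₀ z) := by
      refine ENNReal.measurable_ofReal.comp ?_
      exact measurable_const.mul
        (Finset.measurable_prod _ fun i _ =>
          ((measurable_const.add (measurable_pi_apply i)).pow_const _))
    have hνS : ν S = ∫⁻ z, ENNReal.ofReal (g₀ z) ∂((volume.restrict orth).restrict S) := by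
      rw [hν, orthMeasure, withDensity_apply _ hSmeas]
    rw [hνS, lintegral_pos_iff_support hmeasg₀]
    have hsubset : orth ∩ S ⊆ Function.support fun z => ENNReal.ofReal (g₀ z) := by
      intro z hz
      simp only [Function.mem_support, ne_eq, ENNReal.ofReal_eq_zero, not_le]
      exact hg₀pos z hz.1
    refine lt_of_lt_of_le ?_ (measure_mono hsubset)
    rw [Measure.restrict_restrict hSmeas, Measure.restrict_apply (horth_meas.inter hSmeas)]
    have heq : orth ∩ S ∩ (S ∩ orth) = orth ∩ S := by
      ext z; constructor
      · exact fun h => h.1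
      · exact fun h => ⟨h, h.2, h.1⟩
    rw [heq]
    have hopen : IsOpen (orth ∩ S) := by
      refine IsOpen.inter ?_ ?_
      · have : orth = ⋂ i, {z : Fin m → ℝ | 0 < z i} := by ext z; simp [horth]
        rw [this]
        exact isOpen_iInter_of_finite fun i => isOpen_lt continuous_const (continuous_apply i)
      · exact isOpen_lt continuous_const
          (continuous_finset_sum _ fun i _ => continuous_const.mul ((continuous_apply i).abs))
    have hne : (orth ∩ S).Nonempty := by
      have hsuma : 0 < ∑ i, a i :=
        Finset.sum_pos (fun i _ => ha i) (Finset.univ_nonempty_iff.mpr ⟨⟨0, hm⟩⟩)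
      refine ⟨fun _ => (τ + 1) / (∑ i, a i), ?_, ?_⟩
      · intro i
        exact div_pos (by linarith) hsuma
      · show τ < ∑ i, a i * |(τ + 1) / (∑ i, a i)|
        have hc : 0 < (τ + 1) / (∑ i, a i) := div_pos (by linarith) hsuma
        rw [show ∑ i, a i * |(τ + 1) / (∑ i, a i)| =
            (∑ i, a i) * ((τ + 1) / (∑ i, a i)) by
          rw [← Finset.sum_mul]
          congr 1
          exact abs_of_pos hc]
        rw [mul_div_cancel₀ _ (ne_of_gt hsuma)]
        linarith
    exact hopen.measure_pos volume hne
  -- finiteness and positivity facts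
  have h1δpos : (0:ℝ) < 1 - δ := by linarith
  have hkeyS := key S hSmeas
  have hkeyA := key A hAmeas
  have hμS1 : μ S ≤ 1 := le_trans (measure_mono (Set.subset_univ S)) (by simp)
  have hc0 : ENNReal.ofReal (1 - δ) ≠ 0 := by
    rw [ne_eq, ENNReal.ofReal_eq_zero, not_le]
    exact h1δpos
  have hνSfin : ν S ≠ ⊤ := by
    intro h
    have h2 := hkeyS.1
    rw [h, ENNReal.mul_top hc0] at h2
    rw [top_le_iff] at h2
    rw [h2] at hμS1
    exact absurd hμS1 (by simp)
  have hνAfin : ν A ≠ ⊤ :=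
    ne_top_of_le_ne_top hνSfin (measure_mono (Set.inter_subset_right))
  have hμSfin : μ S ≠ ⊤ := ne_top_of_le_ne_top (by simp) hμS1
  have hμAfin : μ A ≠ ⊤ :=
    ne_top_of_le_ne_top hμSfin (measure_mono (Set.inter_subset_right))
  have hμSpos : 0 < μ S := by
    refine lt_of_lt_of_le ?_ hkeyS.1
    exact ENNReal.mul_pos hc0 (ne_of_gt hνSpos)
  -- pass to real numbers
  set pS := (μ S).toReal with hpS
  set qS := (ν S).toReal with hqS
  set pB := (μ A).toReal with hpB
  set qB := (ν A).toReal with hqB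
  have hpSpos : 0 < pS := ENNReal.toReal_pos (ne_of_gt hμSpos) hμSfin
  have hqSpos : 0 < qS := ENNReal.toReal_pos (ne_of_gt hνSpos) hνSfin
  have hpBnn : 0 ≤ pB := ENNReal.toReal_nonneg
  have hqBnn : 0 ≤ qB := ENNReal.toReal_nonneg
  have hpBle : pB ≤ pS :=
    ENNReal.toReal_mono hμSfin (measure_mono Set.inter_subset_right)
  have hqBle : qB ≤ qS :=
    ENNReal.toReal_mono hνSfin (measure_mono Set.inter_subset_right)
  have hcomp : ∀ E : Set (Fin m → ℝ), MeasurableSet E → ν E ≠ ⊤ → μ E ≠ ⊤ →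
      (1 - δ) * (ν E).toReal ≤ (μ E).toReal ∧
        (μ E).toReal ≤ (1 + δ) * (ν E).toReal := by
    intro E hE hνfin hμfin
    have h := key E hE
    constructor
    · have := ENNReal.toReal_mono hμfin h.1
      rwa [ENNReal.toReal_mul, ENNReal.toReal_ofReal (by linarith)] at this
    · have := ENNReal.toReal_mono (by
        exact ENNReal.mul_ne_top ENNReal.ofReal_ne_top hνfin) h.2
      rwa [ENNReal.toReal_mul, ENNReal.toReal_ofReal (by linarith)] at this
  have hScomp := hcomp S hSmeas hνSfin hμSfin
  have hAcomp := hcomp A hAmeas hνAfin hμAfin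
  -- rewrite goal
  rw [heval μ, heval ν, ENNReal.toReal_mul, ENNReal.toReal_mul,
    ENNReal.toReal_inv, ENNReal.toReal_inv]
  have hd1 : pB - qB ≤ δ * qB := by linarith [hAcomp.2]
  have hd2 : qB - pB ≤ δ * qB := by linarith [hAcomp.1]
  have hd3 : pS - qS ≤ δ * qS := by linarith [hScomp.2]
  have hd4 : qS - pS ≤ δ * qS := by linarith [hScomp.1]
  have h1 : |pB * qS - qB * pS| ≤ 2 * δ * (pS * qS) := by
    rw [abs_le]
    constructor
    · nlinarith [mul_le_mul_of_nonneg_right hd2 hpSpos.le,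
        mul_le_mul_of_nonneg_left hd3 hpBnn,
        mul_le_mul_of_nonneg_right hqBle (mul_nonneg hδ.le hpSpos.le),
        mul_le_mul_of_nonneg_right hpBle (mul_nonneg hδ.le hqSpos.le)]
    · nlinarith [mul_le_mul_of_nonneg_right hd1 hpSpos.le,
        mul_le_mul_of_nonneg_left hd4 hpBnn,
        mul_le_mul_of_nonneg_right hqBle (mul_nonneg hδ.le hpSpos.le),
        mul_le_mul_of_nonneg_right hpBle (mul_nonneg hδ.le hqSpos.le)]
  have heq2 : pS⁻¹ * pB - qS⁻¹ * qB = (pB * qS - qB * pS) / (pS * qS) := by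
    field_simp
  rw [heq2, abs_div, abs_of_pos (mul_pos hpSpos hqSpos),
    div_le_iff₀ (mul_pos hpSpos hqSpos)]
  calc |pB * qS - qB * pS| ≤ 2 * δ * (pS * qS) := h1
    _ = 2 * δ * (pS * qS) := rfl
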